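/- Given g ∈ ℕ and c = (c₁,…,c_d) ∈ ℕ^d with c_i ≥ 2 for some coordinate setup (c not coordinatewise ≤ (1,…,1)), there exists a GNS in ℕ₀^d with corner c and genus g if and only if ⌈c₁/2⌉ + ⋯ + ⌈c_d/2⌉ ≤ g ≤ c₁⋯c_d − 1. -/
import Mathlib


open scoped BigOperators

/-- A generalized numerical semigroup (GNS): a submonoid of ℕ₀^d with finite complement. -/
def IsGNS {d : ℕ} (S : Set (Fin d → ℕ)) : Prop :=
  0 ∈ S ∧ (∀ x ∈ S, ∀ y ∈ S, x + y ∈ S) ∧ Sᶜ.Finite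

/-- `c` is a corner of `S`: (1) any tuple whose i-th coordinate is ≥ c i lies in S;
(2) for each i with c i ≥ 1 there is a tuple with i-th coordinate c i − 1 outside S. -/
def IsCornerOf {d : ℕ} (S : Set (Fin d → ℕ)) (c : Fin d → ℕ) : Prop :=
  c ∈ S ∧
  (∀ i : Fin d, ∀ x : Fin d → ℕ, c i ≤ x i → x ∈ S) ∧
  (∀ i : Fin d, c i = 0 ∨ ∃ x : Fin d → ℕ, x i + 1 = c i ∧ x ∉ S)

namespace GNSproof

open Finset

variable {d : ℕ}

lemma psa (i j : Fin d) (k : ℕ) : (Pi.single i k : Fin d → ℕ) j = if j = i then k else 0 := by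
  rcases eq_or_ne j i with rfl | h
  · rw [if_pos rfl, Pi.single_eq_same]
  · rw [if_neg h, Pi.single_eq_of_ne h]

/-- nonzero values of coordinate `i` occurring in `H` -/
def vals (H : Finset (Fin d → ℕ)) (i : Fin d) : Finset ℕ :=
  (H.image fun v => v i).erase 0

lemma mem_vals {H : Finset (Fin d → ℕ)} {i : Fin d} {a : ℕ} :
    a ∈ vals H i ↔ a ≠ 0 ∧ ∃ v ∈ H, v i = a := by
  simp [vals, mem_erase, mem_image]

lemma claimD_aux : ∀ (n : ℕ) (H : Finset (Fin d → ℕ)), H.card = n →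
    (0 : Fin d → ℕ) ∉ H → (∀ x y : Fin d → ℕ, x ∉ H → y ∉ H → x + y ∉ H) →
    ∑ i : Fin d, (vals H i).card ≤ H.card := by
  intro n
  induction n using Nat.strong_induction_on with
  | _ n ih =>
    intro H hcard h0 hcl
    rcases H.eq_empty_or_nonempty with rfl | hne
    · simp [vals]
    obtain ⟨w, hwH, hwmax⟩ := H.exists_max_image (fun v => ∑ i, v i) hne
    have hwmax' : ∀ y : Fin d → ℕ, y ≠ 0 → w + y ∉ H := by
      intro y hy hmem
      have hlt : ∑ i, w i < ∑ i, (w + y) i := by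
        obtain ⟨i, hi⟩ := Function.ne_iff.mp hy
        refine Finset.sum_lt_sum (fun j _ => Nat.le_add_right _ _) ⟨i, mem_univ i, ?_⟩
        have : y i ≠ 0 := hi
        have h2 : (w + y) i = w i + y i := rfl
        omega
      have h2 := hwmax (w + y) hmem
      omega
    have h0' : (0 : Fin d → ℕ) ∉ H.erase w := fun h => h0 (mem_of_mem_erase h)
    have hcl' : ∀ x y : Fin d → ℕ, x ∉ H.erase w → y ∉ H.erase w → x + y ∉ H.erase w := by
      intro x y hx hy hxy
      have hxyH := mem_of_mem_erase hxy
      have hxyw := ne_of_mem_erase hxy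
      have hx' : x ∉ H ∨ x = w := by
        by_cases h : x ∈ H
        · right; by_contra hne'; exact hx (mem_erase.mpr ⟨hne', h⟩)
        · left; exact h
      have hy' : y ∉ H ∨ y = w := by
        by_cases h : y ∈ H
        · right; by_contra hne'; exact hy (mem_erase.mpr ⟨hne', h⟩)
        · left; exact h
      rcases hx' with hx' | rfl
      · rcases hy' with hy' | rfl
        · exact hcl x y hx' hy' hxyH
        · by_cases hx0 : x = 0
          · subst hx0; rw [zero_add] at hxyw; exact hxyw rfl
          · rw [add_comm] at hxyH; exact hwmax' x hx0 hxyH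
      · by_cases hy0 : y = 0
        · subst hy0; rw [add_zero] at hxyw; exact hxyw rfl
        · exact hwmax' y hy0 hxyH
    have hpos : 0 < H.card := card_pos.mpr hne
    have hcard' : (H.erase w).card = H.card - 1 := card_erase_of_mem hwH
    have hlt : (H.erase w).card < n := by omega
    have IH := ih _ hlt (H.erase w) rfl h0' hcl'
    -- always: vals H i ⊆ vals (H.erase w) i ∪ {w i}
    have hcard1 : ∀ i, (vals H i).card ≤ (vals (H.erase w) i).card + 1 := by
      intro i
      have hsub1 : vals H i ⊆ vals (H.erase w) i ∪ {w i} := by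
        intro a ha
        obtain ⟨ha0, v, hv, rfl⟩ := mem_vals.mp ha
        by_cases hvw : v = w
        · subst hvw; exact mem_union_right _ (mem_singleton_self _)
        · exact mem_union_left _ (mem_vals.mpr ⟨ha0, v, mem_erase.mpr ⟨hvw, hv⟩, rfl⟩)
      calc (vals H i).card ≤ (vals (H.erase w) i ∪ {w i}).card := card_le_card hsub1
        _ ≤ (vals (H.erase w) i).card + 1 := card_union_le _ _
    -- good coordinates
    have hgood : ∀ i : Fin d, ¬(w i ≠ 0 ∧ ∀ v ∈ H, v ≠ w → v i ≠ w i) →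
        (vals H i).card ≤ (vals (H.erase w) i).card := by
      intro i hbad
      push_neg at hbad
      refine card_le_card (fun a ha => ?_)
      obtain ⟨ha0, v, hv, rfl⟩ := mem_vals.mp ha
      by_cases hvw : v = w
      · subst hvw
        obtain ⟨u, huH, huw, hui⟩ := hbad ha0
        exact mem_vals.mpr ⟨ha0, u, mem_erase.mpr ⟨huw, huH⟩, hui⟩
      · exact mem_vals.mpr ⟨ha0, v, mem_erase.mpr ⟨hvw, hv⟩, rfl⟩
    -- at most one bad coordinate
    have hbadunique : ∀ i j : Fin d, (w i ≠ 0 ∧ ∀ v ∈ H, v ≠ w → v i ≠ w i) →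
        (w j ≠ 0 ∧ ∀ v ∈ H, v ≠ w → v j ≠ w j) → i = j := by
      rintro i j ⟨hi0, hiu⟩ ⟨hj0, hju⟩
      by_contra hij
      have hji : j ≠ i := fun h => hij h.symm
      have huz : Function.update w i 0 + (Pi.single i (w i) : Fin d → ℕ) = w := by
        funext l
        rw [Pi.add_apply]
        rcases eq_or_ne l i with rfl | hl
        · rw [Function.update_self, psa, if_pos rfl, zero_add]
        · rw [Function.update_of_ne hl, psa, if_neg hl, add_zero]
      have huH : Function.update w i 0 ∉ H := by
        intro h
        have hne' : Function.update w i 0 ≠ w := by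
          intro he
          have := congrFun he i
          rw [Function.update_self] at this
          exact hi0 this.symm
        have : Function.update w i 0 j = w j := Function.update_of_ne hji 0 w
        exact hju _ h hne' this
      have hzH : (Pi.single i (w i) : Fin d → ℕ) ∉ H := by
        intro h
        have hne' : (Pi.single i (w i) : Fin d → ℕ) ≠ w := by
          intro he
          have := congrFun he j
          rw [psa, if_neg hji] at this
          exact hj0 this.symm
        exact hiu _ h hne' (by rw [psa, if_pos rfl])
      have := hcl _ _ huH hzH
      rw [huz] at this
      exact this hwH
    have hsum : ∑ i : Fin d, (vals H i).card ≤ ∑ i : Fin d, (vals (H.erase w) i).card + 1 := by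
      by_cases hex : ∃ i : Fin d, w i ≠ 0 ∧ ∀ v ∈ H, v ≠ w → v i ≠ w i
      · obtain ⟨i₀, hbad₀⟩ := hex
        have e1 : ∑ i ∈ univ.erase i₀, (vals H i).card + (vals H i₀).card
            = ∑ i : Fin d, (vals H i).card := Finset.sum_erase_add _ _ (mem_univ i₀)
        have e2 : ∑ i ∈ univ.erase i₀, (vals (H.erase w) i).card + (vals (H.erase w) i₀).card
            = ∑ i : Fin d, (vals (H.erase w) i).card := Finset.sum_erase_add _ _ (mem_univ i₀)
        have hle1 : ∑ i ∈ univ.erase i₀, (vals H i).card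
            ≤ ∑ i ∈ univ.erase i₀, (vals (H.erase w) i).card :=
          Finset.sum_le_sum (fun i hi => hgood i
            (fun hb => (mem_erase.mp hi).1 (hbadunique i i₀ hb hbad₀)))
        have hle2 := hcard1 i₀
        omega
      · push_neg at hex
        have : ∑ i : Fin d, (vals H i).card ≤ ∑ i : Fin d, (vals (H.erase w) i).card :=
          Finset.sum_le_sum (fun i _ => hgood i (fun hb => by
            obtain ⟨v, hvH, hvw, hvi⟩ := hex i hb.1
            exact hb.2 v hvH hvw hvi))
        omega
    omega

lemma claimD (H : Finset (Fin d → ℕ)) (h0 : (0 : Fin d → ℕ) ∉ H)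
    (hcl : ∀ x y : Fin d → ℕ, x ∉ H → y ∉ H → x + y ∉ H) :
    ∑ i : Fin d, (vals H i).card ≤ H.card :=
  claimD_aux H.card H rfl h0 hcl

lemma vals_card_ge (S : Set (Fin d → ℕ)) (hSadd : ∀ x ∈ S, ∀ y ∈ S, x + y ∈ S)
    (hfin : Sᶜ.Finite) (c : Fin d → ℕ) (hc : ∀ i, 2 ≤ c i) (i : Fin d)
    (x : Fin d → ℕ) (hxi : x i + 1 = c i) (hxS : x ∉ S) :
    (c i + 1) / 2 ≤ (vals hfin.toFinset i).card := by
  have hci := hc i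
  have hmem : ∀ v : Fin d → ℕ, v ∈ hfin.toFinset ↔ v ∉ S := fun v => by
    rw [Set.Finite.mem_toFinset, Set.mem_compl_iff]
  set m := c i - 1 with hm
  set h := (c i + 1) / 2 with hh
  -- pairing
  have hpair : ∀ k, k ≤ m → (∃ v : Fin d → ℕ, v ∉ S ∧ v i = k) ∨
      (∃ v : Fin d → ℕ, v ∉ S ∧ v i = m - k) := by
    intro k hk
    by_contra hcon
    push_neg at hcon
    obtain ⟨h1, h2⟩ := hcon
    have hx1 : Function.update x i k ∈ S := by
      by_contra hco
      exact h1 _ hco (Function.update_self i k x)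
    have hx2 : (Pi.single i (m - k) : Fin d → ℕ) ∈ S := by
      by_contra hco
      exact h2 _ hco (by rw [psa, if_pos rfl])
    have hdecomp : Function.update x i k + (Pi.single i (m - k) : Fin d → ℕ) = x := by
      funext l
      rw [Pi.add_apply]
      rcases eq_or_ne l i with rfl | hl
      · rw [Function.update_self, psa, if_pos rfl]; omega
      · rw [Function.update_of_ne hl, psa, if_neg hl, add_zero]
    have := hSadd _ hx1 _ hx2
    rw [hdecomp] at this
    exact hxS this
  have hmval : m ∈ vals hfin.toFinset i :=
    mem_vals.mpr ⟨by omega, x, (hmem x).mpr hxS, by omega⟩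
  have hmain : ∀ p < h, (if m - p ∈ vals hfin.toFinset i then m - p else p)
      ∈ vals hfin.toFinset i := by
    intro p hp
    split_ifs with hmem2
    · exact hmem2
    · have hp0 : p ≠ 0 := by
        rintro rfl
        rw [Nat.sub_zero] at hmem2
        exact hmem2 hmval
      rcases hpair p (by omega) with ⟨v, hv, hvi⟩ | ⟨v, hv, hvi⟩
      · exact mem_vals.mpr ⟨hp0, v, (hmem v).mpr hv, hvi⟩
      · exact absurd (mem_vals.mpr ⟨by omega, v, (hmem v).mpr hv, hvi⟩) hmem2
  calc h = (Finset.range h).card := (card_range h).symm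
    _ ≤ (vals hfin.toFinset i).card := by
        refine Finset.card_le_card_of_injOn
          (fun p => if m - p ∈ vals hfin.toFinset i then m - p else p)
          (fun p hp => hmain p (mem_range.mp hp)) ?_
        intro p hp q hq he
        rw [mem_coe, mem_range] at hp hq
        simp only at he
        split_ifs at he <;> omega


variable (c : Fin d → ℕ)

noncomputable def encEq : (∀ i, Fin (c i)) ≃ Fin (∏ i, c i) :=
  Fintype.equivFinOfCardEq (by simp)

noncomputable def enc (x : Fin d → ℕ) : ℕ :=
  if hx : ∀ i, x i < c i then (encEq c (fun i => ⟨x i, hx i⟩)).val else 0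

lemma enc_lt (x : Fin d → ℕ) (hx : ∀ i, x i < c i) : enc c x < ∏ i, c i := by
  rw [enc, dif_pos hx]; exact (encEq c _).isLt

lemma enc_inj {x y : Fin d → ℕ} (hx : ∀ i, x i < c i) (hy : ∀ i, y i < c i)
    (h : enc c x = enc c y) : x = y := by
  unfold enc at h
  rw [dif_pos hx, dif_pos hy] at h
  have h2 := (encEq c).injective (Fin.val_injective h)
  funext i
  exact congrArg Fin.val (congrFun h2 i)

noncomputable def rank (x : Fin d → ℕ) : ℕ := (∏ i, c i) * (∑ i, x i) + enc c x

lemma rank_lt_rank {x y : Fin d → ℕ} (hy : ∀ i, y i < c i)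
    (hle : ∀ i, x i ≤ y i) (hne : x ≠ y) : rank c x < rank c y := by
  have hx : ∀ i, x i < c i := fun i => lt_of_le_of_lt (hle i) (hy i)
  have hsum : ∑ i, x i < ∑ i, y i := by
    obtain ⟨i, hi⟩ := Function.ne_iff.mp hne
    exact Finset.sum_lt_sum (fun j _ => hle j) ⟨i, mem_univ i, lt_of_le_of_ne (hle i) hi⟩
  have h1 := enc_lt c x hx
  have h2 : (∏ i, c i) * (∑ i, x i + 1) ≤ (∏ i, c i) * (∑ i, y i) :=
    Nat.mul_le_mul_left _ (by omega)
  have h3 : (∏ i, c i) * (∑ i, x i + 1) = (∏ i, c i) * (∑ i, x i) + ∏ i, c i := by ring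
  rw [rank, rank]
  omega

lemma rank_inj {x y : Fin d → ℕ} (hx : ∀ i, x i < c i) (hy : ∀ i, y i < c i)
    (h : rank c x = rank c y) : x = y := by
  have h1 := enc_lt c x hx
  have h2 := enc_lt c y hy
  have e1 : rank c x % (∏ i, c i) = enc c x := by
    rw [rank, Nat.mul_add_mod, Nat.mod_eq_of_lt h1]
  have e2 : rank c y % (∏ i, c i) = enc c y := by
    rw [rank, Nat.mul_add_mod, Nat.mod_eq_of_lt h2]
  exact enc_inj c hx hy (by rw [← e1, ← e2, h])

def axisLow (x : Fin d → ℕ) : Prop := ∃ i k, k ≠ 0 ∧ k < (c i + 1) / 2 ∧ x = Pi.single i k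

def wit (x : Fin d → ℕ) : Prop := ∃ i, x = Pi.single i (c i - 1)

open Classical in
noncomputable def GF (ρ : ℕ) : Finset (Fin d → ℕ) :=
  (Fintype.piFinset fun i => Finset.range (c i)).filter
    (fun x => (x ≠ 0 ∧ rank c x < ρ) ∨ axisLow c x ∨ wit c x)

lemma mem_GF {ρ : ℕ} {x : Fin d → ℕ} : x ∈ GF c ρ ↔
    (∀ i, x i < c i) ∧ ((x ≠ 0 ∧ rank c x < ρ) ∨ axisLow c x ∨ wit c x) := by
  simp only [GF, mem_filter, Fintype.mem_piFinset, mem_range]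


lemma GF_zero_card (hc : ∀ i, 2 ≤ c i) : (GF c 0).card = ∑ i, (c i + 1) / 2 := by
  have hGF : GF c 0 = Finset.univ.biUnion (fun i : Fin d =>
      (((Finset.range ((c i + 1) / 2)).erase 0) ∪ {c i - 1}).image
        (fun k => (Pi.single i k : Fin d → ℕ))) := by
    ext x
    rw [mem_GF, mem_biUnion]
    constructor
    · rintro ⟨hbox, ⟨-, hr⟩ | ⟨i, k, hk0, hkh, rfl⟩ | ⟨i, rfl⟩⟩
      · omega
      · exact ⟨i, mem_univ i, mem_image.mpr
          ⟨k, mem_union_left _ (mem_erase.mpr ⟨hk0, mem_range.mpr hkh⟩), rfl⟩⟩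
      · exact ⟨i, mem_univ i, mem_image.mpr
          ⟨c i - 1, mem_union_right _ (mem_singleton_self _), rfl⟩⟩
    · rintro ⟨i, -, hx⟩
      obtain ⟨k, hk, rfl⟩ := mem_image.mp hx
      have hci := hc i
      rcases mem_union.mp hk with hk | hk
      · obtain ⟨hk0, hkr⟩ := mem_erase.mp hk
        rw [mem_range] at hkr
        refine ⟨?_, Or.inr (Or.inl ⟨i, k, hk0, hkr, rfl⟩)⟩
        intro j
        rw [psa]
        split_ifs with hj
        · subst hj; omega
        · have := hc j; omega
      · rw [mem_singleton] at hk
        subst hk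
        refine ⟨?_, Or.inr (Or.inr ⟨i, rfl⟩)⟩
        intro j
        rw [psa]
        split_ifs with hj
        · subst hj; omega
        · have := hc j; omega
  have hdis : ∀ i ∈ (Finset.univ : Finset (Fin d)), ∀ j ∈ (Finset.univ : Finset (Fin d)),
      i ≠ j →
      Disjoint ((((Finset.range ((c i + 1) / 2)).erase 0) ∪ {c i - 1}).image
        (fun k => (Pi.single i k : Fin d → ℕ)))
        ((((Finset.range ((c j + 1) / 2)).erase 0) ∪ {c j - 1}).image
        (fun k => (Pi.single j k : Fin d → ℕ))) := by
    intro i _ j _ hij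
    rw [Finset.disjoint_left]
    intro a hai haj
    obtain ⟨k, hk, rfl⟩ := mem_image.mp hai
    obtain ⟨l, hl, he⟩ := mem_image.mp haj
    have hk0 : k ≠ 0 := by
      have hci := hc i
      rcases mem_union.mp hk with hk | hk
      · exact (mem_erase.mp hk).1
      · rw [mem_singleton] at hk; omega
    have h2 : (Pi.single j l : Fin d → ℕ) i = (Pi.single i k : Fin d → ℕ) i := congrFun he i
    rw [psa, psa, if_pos rfl, if_neg hij] at h2
    exact hk0 h2.symm
  rw [hGF, card_biUnion hdis]
  refine Finset.sum_congr rfl (fun i _ => ?_)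
  have hci := hc i
  have hinj : Set.InjOn (fun k => (Pi.single i k : Fin d → ℕ))
      ↑(((Finset.range ((c i + 1) / 2)).erase 0) ∪ {c i - 1}) := by
    intro a _ b _ hab
    have hab' : (Pi.single i a : Fin d → ℕ) = Pi.single i b := hab
    have h2 : (Pi.single i a : Fin d → ℕ) i = (Pi.single i b : Fin d → ℕ) i := congrFun hab' i
    rwa [psa, psa, if_pos rfl, if_pos rfl] at h2
  rw [card_image_of_injOn hinj, card_union_of_disjoint, card_erase_of_mem, card_singleton,
    card_range]
  · omega
  · exact mem_range.mpr (by omega)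
  · rw [disjoint_singleton_right]
    intro hmem
    have := mem_range.mp (mem_erase.mp hmem).2
    omega

lemma GF_top_card (hc : ∀ i, 2 ≤ c i) :
    (GF c ((∏ i, c i) * (∑ i, c i + 1))).card = (∏ i, c i) - 1 := by
  have hGF : GF c ((∏ i, c i) * (∑ i, c i + 1))
      = (Fintype.piFinset fun i => Finset.range (c i)).erase 0 := by
    ext x
    rw [mem_GF, mem_erase, Fintype.mem_piFinset]
    simp only [mem_range]
    constructor
    · rintro ⟨hbox, ⟨h0, -⟩ | ⟨i, k, hk0, -, rfl⟩ | ⟨i, rfl⟩⟩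
      · exact ⟨h0, hbox⟩
      · refine ⟨fun h0 => hk0 ?_, hbox⟩
        have := congrFun h0 i
        rwa [psa, if_pos rfl, Pi.zero_apply] at this
      · refine ⟨fun h0 => ?_, hbox⟩
        have := congrFun h0 i
        rw [psa, if_pos rfl, Pi.zero_apply] at this
        have := hc i
        omega
    · rintro ⟨h0, hbox⟩
      refine ⟨hbox, Or.inl ⟨h0, ?_⟩⟩
      have h1 := enc_lt c x hbox
      have h2 : ∑ i, x i ≤ ∑ i, c i := Finset.sum_le_sum (fun i _ => le_of_lt (hbox i))
      have h3 : (∏ i, c i) * (∑ i, x i + 1) ≤ (∏ i, c i) * (∑ i, c i + 1) :=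
        Nat.mul_le_mul_left _ (by omega)
      have h4 : (∏ i, c i) * (∑ i, x i + 1) = (∏ i, c i) * (∑ i, x i) + ∏ i, c i := by ring
      rw [rank]
      omega
  rw [hGF, card_erase_of_mem, Fintype.card_piFinset]
  · simp [card_range]
  · rw [Fintype.mem_piFinset]
    intro i
    rw [mem_range]
    simp only [Pi.zero_apply]
    have := hc i
    omega

lemma GF_step (ρ : ℕ) : (GF c (ρ + 1)).card ≤ (GF c ρ).card + 1 := by
  have hsub : GF c ρ ⊆ GF c (ρ + 1) := by
    intro x hx
    obtain ⟨hbox, hpred⟩ := (mem_GF c).mp hx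
    refine (mem_GF c).mpr ⟨hbox, ?_⟩
    rcases hpred with ⟨h0, hr⟩ | h | h
    · exact Or.inl ⟨h0, by omega⟩
    · exact Or.inr (Or.inl h)
    · exact Or.inr (Or.inr h)
  have key : ∀ x ∈ GF c (ρ + 1) \ GF c ρ, (∀ i, x i < c i) ∧ rank c x = ρ := by
    intro x hx
    obtain ⟨hx1, hx2⟩ := mem_sdiff.mp hx
    obtain ⟨hbox, hpred⟩ := (mem_GF c).mp hx1
    rcases hpred with ⟨h0, hr⟩ | h | h
    · refine ⟨hbox, ?_⟩
      by_contra hne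
      exact hx2 ((mem_GF c).mpr ⟨hbox, Or.inl ⟨h0, by omega⟩⟩)
    · exact absurd ((mem_GF c).mpr ⟨hbox, Or.inr (Or.inl h)⟩) hx2
    · exact absurd ((mem_GF c).mpr ⟨hbox, Or.inr (Or.inr h)⟩) hx2
  have hone : (GF c (ρ + 1) \ GF c ρ).card ≤ 1 := by
    rw [Finset.card_le_one]
    intro x hx y hy
    obtain ⟨hbx, hrx⟩ := key x hx
    obtain ⟨hby, hry⟩ := key y hy
    exact rank_inj c hbx hby (by rw [hrx, hry])
  have := Finset.card_sdiff_add_card_eq_card hsub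
  omega

lemma exists_card_eq (f : ℕ → ℕ) (hstep : ∀ n, f (n + 1) ≤ f n + 1) :
    ∀ N g, f 0 ≤ g → g ≤ f N → ∃ ρ, f ρ = g := by
  intro N
  induction N with
  | zero => intro g h1 h2; exact ⟨0, by omega⟩
  | succ N ih =>
    intro g h1 h2
    by_cases hle : g ≤ f N
    · exact ih g h1 hle
    · exact ⟨N + 1, by have := hstep N; omega⟩

lemma GF_closed (hc : ∀ i, 2 ≤ c i) (ρ : ℕ) :
    ∀ x y : Fin d → ℕ, x ∉ GF c ρ → y ∉ GF c ρ → x + y ∉ GF c ρ := by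
  intro x y hx hy hxy
  by_cases hx0 : x = 0
  · subst hx0; rw [zero_add] at hxy; exact hy hxy
  by_cases hy0 : y = 0
  · subst hy0; rw [add_zero] at hxy; exact hx hxy
  obtain ⟨hbox, hpred⟩ := (mem_GF c).mp hxy
  obtain ⟨i₁, hi₁⟩ := Function.ne_iff.mp hx0
  obtain ⟨i₂, hi₂⟩ := Function.ne_iff.mp hy0
  simp only [Pi.zero_apply] at hi₁ hi₂
  have hadd : ∀ j, (x + y) j = x j + y j := fun j => rfl
  rcases hpred with ⟨-, hr⟩ | ⟨i, k, hk0, hkh, hs⟩ | ⟨i, hs⟩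
  · apply hx
    have hbx : ∀ j, x j < c j := fun j => by have := hbox j; have := hadd j; omega
    refine (mem_GF c).mpr ⟨hbx, Or.inl ⟨hx0, ?_⟩⟩
    have hne : x ≠ x + y := by
      intro h
      have := congrFun h i₂
      rw [hadd] at this
      omega
    have := rank_lt_rank c hbox (fun j => by have := hadd j; omega) hne
    omega
  · have hoff : ∀ j, j ≠ i → x j = 0 ∧ y j = 0 := by
      intro j hj
      have h1 := congrFun hs j
      rw [hadd, psa, if_neg hj] at h1
      omega
    have hxine : x i ≠ 0 := by
      rcases eq_or_ne i₁ i with rfl | hne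
      · exact hi₁
      · exact absurd (hoff i₁ hne).1 hi₁
    have hyine : y i ≠ 0 := by
      rcases eq_or_ne i₂ i with rfl | hne
      · exact hi₂
      · exact absurd (hoff i₂ hne).2 hi₂
    have hsum : x i + y i = k := by
      have h1 := congrFun hs i
      rwa [hadd, psa, if_pos rfl] at h1
    apply hx
    have hci := hc i
    refine (mem_GF c).mpr ⟨?_, Or.inr (Or.inl ⟨i, x i, hxine, by omega, ?_⟩)⟩
    · intro j
      rcases eq_or_ne j i with rfl | hj
      · omega
      · rw [(hoff j hj).1]; have := hc j; omega
    · funext j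
      rcases eq_or_ne j i with rfl | hj
      · rw [psa, if_pos rfl]
      · rw [psa, if_neg hj, (hoff j hj).1]
  · have hoff : ∀ j, j ≠ i → x j = 0 ∧ y j = 0 := by
      intro j hj
      have h1 := congrFun hs j
      rw [hadd, psa, if_neg hj] at h1
      omega
    have hxine : x i ≠ 0 := by
      rcases eq_or_ne i₁ i with rfl | hne
      · exact hi₁
      · exact absurd (hoff i₁ hne).1 hi₁
    have hyine : y i ≠ 0 := by
      rcases eq_or_ne i₂ i with rfl | hne
      · exact hi₂
      · exact absurd (hoff i₂ hne).2 hi₂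
    have hsum : x i + y i = c i - 1 := by
      have h1 := congrFun hs i
      rwa [hadd, psa, if_pos rfl] at h1
    have hci := hc i
    by_cases hah : x i < (c i + 1) / 2
    · apply hx
      refine (mem_GF c).mpr ⟨?_, Or.inr (Or.inl ⟨i, x i, hxine, hah, ?_⟩)⟩
      · intro j
        rcases eq_or_ne j i with rfl | hj
        · omega
        · rw [(hoff j hj).1]; have := hc j; omega
      · funext j
        rcases eq_or_ne j i with rfl | hj
        · rw [psa, if_pos rfl]
        · rw [psa, if_neg hj, (hoff j hj).1]
    · apply hy
      refine (mem_GF c).mpr ⟨?_, Or.inr (Or.inl ⟨i, y i, hyine, by omega, ?_⟩)⟩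
      · intro j
        rcases eq_or_ne j i with rfl | hj
        · omega
        · rw [(hoff j hj).2]; have := hc j; omega
      · funext j
        rcases eq_or_ne j i with rfl | hj
        · rw [psa, if_pos rfl]
        · rw [psa, if_neg hj, (hoff j hj).2]

lemma backward {d : ℕ} (c : Fin d → ℕ) (hc : ∀ i, 2 ≤ c i) (g : ℕ)
    (h1 : ∑ i : Fin d, (c i + 1) / 2 ≤ g) (h2 : g ≤ (∏ i : Fin d, c i) - 1) :
    ∃ S : Set (Fin d → ℕ), IsGNS S ∧ IsCornerOf S c ∧ Set.ncard Sᶜ = g := by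
  obtain ⟨ρ, hρ⟩ := exists_card_eq (fun ρ => (GF c ρ).card) (fun n => GF_step c n)
    ((∏ i, c i) * (∑ i, c i + 1)) g
    (by show (GF c 0).card ≤ g; rw [GF_zero_card c hc]; exact h1)
    (by show g ≤ (GF c ((∏ i, c i) * (∑ i, c i + 1))).card; rw [GF_top_card c hc]; exact h2)
  refine ⟨(↑(GF c ρ) : Set (Fin d → ℕ))ᶜ, ⟨?_, ?_, ?_⟩, ⟨?_, ?_, ?_⟩, ?_⟩
  · -- 0 ∈ S
    simp only [Set.mem_compl_iff, Finset.mem_coe]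
    intro h0
    obtain ⟨hbox, hpred⟩ := (mem_GF c).mp h0
    rcases hpred with ⟨h, -⟩ | ⟨i, k, hk0, -, hs⟩ | ⟨i, hs⟩
    · exact h rfl
    · have := congrFun hs i
      rw [psa, if_pos rfl, Pi.zero_apply] at this
      exact hk0 this.symm
    · have := congrFun hs i
      rw [psa, if_pos rfl, Pi.zero_apply] at this
      have := hc i
      omega
  · -- closed under addition
    intro x hx y hy
    simp only [Set.mem_compl_iff, Finset.mem_coe] at hx hy ⊢
    exact GF_closed c hc ρ x y hx hy
  · -- finite complement
    rw [compl_compl]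
    exact Finset.finite_toSet _
  · -- c ∈ S
    simp only [Set.mem_compl_iff, Finset.mem_coe]
    intro hmem
    obtain ⟨hbox, hpred⟩ := (mem_GF c).mp hmem
    rcases hpred with ⟨h0, -⟩ | ⟨i, k, -, -, -⟩ | ⟨i, -⟩
    · obtain ⟨i, -⟩ := Function.ne_iff.mp h0
      exact absurd (hbox i) (lt_irrefl _)
    · exact absurd (hbox i) (lt_irrefl _)
    · exact absurd (hbox i) (lt_irrefl _)
  · -- corner condition (1)
    intro i x hix
    simp only [Set.mem_compl_iff, Finset.mem_coe]
    intro hmem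
    have := ((mem_GF c).mp hmem).1 i
    omega
  · -- corner condition (2)
    intro i
    right
    have hci := hc i
    refine ⟨Pi.single i (c i - 1), ?_, ?_⟩
    · rw [psa, if_pos rfl]; omega
    · simp only [Set.mem_compl_iff, Finset.mem_coe, not_not]
      refine (mem_GF c).mpr ⟨?_, Or.inr (Or.inr ⟨i, rfl⟩)⟩
      intro j
      rw [psa]
      split_ifs with hj
      · subst hj; omega
      · have := hc j; omega
  · -- cardinality
    rw [compl_compl, Set.ncard_coe_finset]
    exact hρ

end GNSproof

theorem exists_GNS_corner_genus_iff {d : ℕ} (c : Fin d → ℕ) (g : ℕ)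
    (hc : ∀ i, 2 ≤ c i) (hg : 0 < g) :
    (∃ S : Set (Fin d → ℕ), IsGNS S ∧ IsCornerOf S c ∧ Set.ncard Sᶜ = g) ↔
      (∑ i : Fin d, (c i + 1) / 2 ≤ g ∧ g ≤ (∏ i : Fin d, c i) - 1) := by
  constructor
  · rintro ⟨S, ⟨hS0, hSadd, hfin⟩, ⟨hcS, hcor1, hcor2⟩, hcard⟩
    have hmem : ∀ v : Fin d → ℕ, v ∈ hfin.toFinset ↔ v ∉ S := fun v => by
      rw [Set.Finite.mem_toFinset, Set.mem_compl_iff]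
    have hH0 : (0 : Fin d → ℕ) ∉ hfin.toFinset := fun h => (hmem 0).mp h hS0
    have hHcl : ∀ x y : Fin d → ℕ, x ∉ hfin.toFinset → y ∉ hfin.toFinset →
        x + y ∉ hfin.toFinset := by
      intro x y hx hy hxy
      have hxS : x ∈ S := by by_contra h; exact hx ((hmem x).mpr h)
      have hyS : y ∈ S := by by_contra h; exact hy ((hmem y).mpr h)
      exact (hmem _).mp hxy (hSadd x hxS y hyS)
    have hcardg : hfin.toFinset.card = g := by
      rw [← Set.ncard_eq_toFinset_card _ hfin]
      exact hcard
    constructor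
    · -- lower bound
      have hclaim := GNSproof.claimD hfin.toFinset hH0 hHcl
      have hper : ∀ i : Fin d, (c i + 1) / 2 ≤ (GNSproof.vals hfin.toFinset i).card := by
        intro i
        rcases hcor2 i with h | ⟨x, hxi, hxS⟩
        · have := hc i; omega
        · exact GNSproof.vals_card_ge S hSadd hfin c hc i x hxi hxS
      calc ∑ i : Fin d, (c i + 1) / 2 ≤ ∑ i : Fin d, (GNSproof.vals hfin.toFinset i).card :=
            Finset.sum_le_sum (fun i _ => hper i)
        _ ≤ hfin.toFinset.card := hclaim
        _ = g := hcardg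
    · -- upper bound
      have hsubbox : hfin.toFinset ⊆
          (Fintype.piFinset fun i => Finset.range (c i)).erase 0 := by
        intro v hv
        rw [Finset.mem_erase]
        have hvS : v ∉ S := (hmem v).mp hv
        constructor
        · rintro rfl; exact hvS hS0
        · rw [Fintype.mem_piFinset]
          intro i
          rw [Finset.mem_range]
          by_contra h
          push_neg at h
          exact hvS (hcor1 i v h)
      have h0mem : (0 : Fin d → ℕ) ∈ Fintype.piFinset fun i => Finset.range (c i) := by
        rw [Fintype.mem_piFinset]
        intro i
        rw [Finset.mem_range]
        simp only [Pi.zero_apply]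
        have := hc i
        omega
      have := Finset.card_le_card hsubbox
      rw [Finset.card_erase_of_mem h0mem, Fintype.card_piFinset] at this
      simp only [Finset.card_range] at this
      omega
  · rintro ⟨h1, h2⟩
    exact GNSproof.backward c hc g h1 h2
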